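/- arXiv:2006.09922 — 2 statements merged into one kernel-verified Lean document; each statement's English description precedes it below -/
import Mathlib

section
/- The function f(k) = m(P_{1,k}) is differentiable on (4,∞), and for every k > 4 its derivative is f′(k) = (2/(kπ))·K(4/k). -/
open Real MeasureTheory Filter

/-- Complete elliptic integral of the first kind. -/
noncomputable def ellK (z : ℝ) : ℝ :=
  ∫ x in (0:ℝ)..1, 1 / Real.sqrt ((1 - x ^ 2) * (1 - z ^ 2 * x ^ 2))

/-- Complete elliptic integral of the third kind. -/
noncomputable def ellPi (n z : ℝ) : ℝ :=
  ∫ x in (0:ℝ)..1, 1 / ((1 - n * x ^ 2) * Real.sqrt ((1 - x ^ 2) * (1 - z ^ 2 * x ^ 2)))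

/-- Mahler measure of `P_{1,k}(x,y) = x + 1/x + y + 1/y + k`. -/
noncomputable def mahlerP1 (k : ℝ) : ℝ :=
  ∫ θ in (0:ℝ)..1, ∫ φ in (0:ℝ)..1,
    Real.log (Norm.norm
      (Complex.exp (2 * Real.pi * Complex.I * θ) +
        (Complex.exp (2 * Real.pi * Complex.I * θ))⁻¹ +
       Complex.exp (2 * Real.pi * Complex.I * φ) +
        (Complex.exp (2 * Real.pi * Complex.I * φ))⁻¹ + (k : ℂ)))

/-- Mahler measure of `P̃_k(x,y) = √((k+4)/(k−4))·(x + 1/x) + y − 1/y − k/√(k−4)`. -/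
noncomputable def mahlerPt (k : ℝ) : ℝ :=
  ∫ θ in (0:ℝ)..1, ∫ φ in (0:ℝ)..1,
    Real.log (Norm.norm
      ((Real.sqrt ((k + 4) / (k - 4)) : ℂ) *
        (Complex.exp (2 * Real.pi * Complex.I * θ) +
          (Complex.exp (2 * Real.pi * Complex.I * θ))⁻¹) +
       Complex.exp (2 * Real.pi * Complex.I * φ) -
        (Complex.exp (2 * Real.pi * Complex.I * φ))⁻¹ -
       ((k / Real.sqrt (k - 4) : ℝ) : ℂ)))

/-- `B_k(e^{2πiθ}) = √((k+4)/(k−4))·2cos(2πθ) − k/√(k−4)`, real on the unit circle. -/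
noncomputable def Bt (k θ : ℝ) : ℝ :=
  Real.sqrt ((k + 4) / (k - 4)) * (2 * Real.cos (2 * Real.pi * θ)) - k / Real.sqrt (k - 4)

/-- `y₊(e^{2πiθ}) = (−B + √(B² + 4))/2`. -/
noncomputable def yPlus (k θ : ℝ) : ℝ := (-Bt k θ + Real.sqrt ((Bt k θ) ^ 2 + 4)) / 2

/-- `y₋(e^{2πiθ}) = (−B − √(B² + 4))/2`. -/
noncomputable def yMinus (k θ : ℝ) : ℝ := (-Bt k θ - Real.sqrt ((Bt k θ) ^ 2 + 4)) / 2

/-- Half-Mahler measure `m⁺(P̃_k) = ∫₀¹ log⁺|y₊(e^{2πiθ})| dθ`. -/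
noncomputable def mPlus (k : ℝ) : ℝ := ∫ θ in (0:ℝ)..1, max 0 (Real.log |yPlus k θ|)

/-- Half-Mahler measure `m⁻(P̃_k) = ∫₀¹ log⁺|y₋(e^{2πiθ})| dθ`. -/
noncomputable def mMinus (k : ℝ) : ℝ := ∫ θ in (0:ℝ)..1, max 0 (Real.log |yMinus k θ|)

open intervalIntegral

lemma alg_core (a b s si c : ℝ) (hs : 0 < s) (ha : 0 < a)
    (hv : 0 < a + s + b * c) (hw : 0 < a + b * c)
    (hs2 : s ^ 2 = a ^ 2 - b ^ 2) (hsc : si ^ 2 + c ^ 2 = 1) :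
    (a + b * c)⁻¹ = 1 / s - 1 / (π * s) *
      (1 / (1 + (b * si / (a + s + b * c)) ^ 2) *
        ((b * (c * (2 * π)) * (a + s + b * c) - b * si * (b * (-si * (2 * π)))) / (a + s + b * c) ^ 2)) := by
  have has : 0 < a + s := by linarith
  have hpi := Real.pi_pos
  have e1 : 1 + (b * si / (a + s + b * c)) ^ 2
      = 2 * (a + s) * (a + b * c) / (a + s + b * c) ^ 2 := by
    field_simp
    linear_combination b ^ 2 * hsc + hs2
  have e2 : (b * (c * (2 * π)) * (a + s + b * c) - b * si * (b * (-si * (2 * π))))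
      = 2 * π * b * ((a + s) * c + b) := by
    linear_combination 2 * π * b ^ 2 * hsc
  rw [e1, e2]
  have e3 : 1 / (π * s) *
      (1 / (2 * (a + s) * (a + b * c) / (a + s + b * c) ^ 2) *
        (2 * π * b * ((a + s) * c + b) / (a + s + b * c) ^ 2))
      = b * ((a + s) * c + b) / (s * ((a + s) * (a + b * c))) := by
    rw [one_div_div]
    field_simp
  rw [e3, inv_eq_one_div]
  field_simp
  linear_combination hs2

lemma key1D (a b : ℝ) (hb : |b| < a) :
    (∫ θ in (0:ℝ)..1, (a + b * Real.cos (2 * π * θ))⁻¹)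
      = (Real.sqrt (a ^ 2 - b ^ 2))⁻¹ := by
  have ha : 0 < a := lt_of_le_of_lt (abs_nonneg b) hb
  have hD : 0 < a ^ 2 - b ^ 2 := by nlinarith [le_abs_self b, neg_abs_le b, abs_nonneg b]
  set s := Real.sqrt (a ^ 2 - b ^ 2) with hs_def
  have hs : 0 < s := Real.sqrt_pos.2 hD
  have hs2 : s ^ 2 = a ^ 2 - b ^ 2 := Real.sq_sqrt hD.le
  have hbc : ∀ t : ℝ, |b * Real.cos t| ≤ |b| := by
    intro t
    rw [abs_mul]
    calc |b| * |Real.cos t| ≤ |b| * 1 := by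
          exact mul_le_mul_of_nonneg_left (Real.abs_cos_le_one t) (abs_nonneg b)
      _ = |b| := mul_one _
  have hpos : ∀ t : ℝ, 0 < a + b * Real.cos t := fun t => by
    have := neg_abs_le (b * Real.cos t); have := hbc t; linarith [abs_le.1 (hbc t)]
  have hden : ∀ t : ℝ, 0 < a + s + b * Real.cos t := fun t => by
    have := hpos t; linarith
  set G : ℝ → ℝ := fun θ => θ / s - 1 / (π * s) *
      Real.arctan (b * Real.sin (2 * π * θ) / (a + s + b * Real.cos (2 * π * θ))) with hG_def
  have hG : ∀ θ : ℝ, HasDerivAt G ((a + b * Real.cos (2 * π * θ))⁻¹) θ := by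
    intro θ
    have hlin : HasDerivAt (fun θ : ℝ => 2 * π * θ) (2 * π) θ := by
      simpa using (hasDerivAt_id θ).const_mul (2 * π)
    have hnum : HasDerivAt (fun θ : ℝ => b * Real.sin (2 * π * θ))
        (b * (Real.cos (2 * π * θ) * (2 * π))) θ := by
      exact (hlin.sin).const_mul b
    have hdenD : HasDerivAt (fun θ : ℝ => a + s + b * Real.cos (2 * π * θ))
        (b * (-Real.sin (2 * π * θ) * (2 * π))) θ := by
      exact ((hlin.cos).const_mul b).const_add (a + s)
    have hq := hnum.div hdenD (ne_of_gt (hden (2 * π * θ)))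
    have harc := hq.arctan
    have htot := ((hasDerivAt_id θ).div_const s).sub (harc.const_mul (1 / (π * s)))
    have : HasDerivAt G
        (1 / s - 1 / (π * s) *
          (1 / (1 + (b * Real.sin (2 * π * θ) / (a + s + b * Real.cos (2 * π * θ))) ^ 2) *
            ((b * (Real.cos (2 * π * θ) * (2 * π)) * (a + s + b * Real.cos (2 * π * θ)) -
              b * Real.sin (2 * π * θ) * (b * (-Real.sin (2 * π * θ) * (2 * π)))) /
              (a + s + b * Real.cos (2 * π * θ)) ^ 2))) θ := by
      convert htot using 1
      all_goals rfl
    rw [alg_core a b s (Real.sin (2 * π * θ)) (Real.cos (2 * π * θ)) hs ha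
      (hden _) (hpos _) hs2 (Real.sin_sq_add_cos_sq _)]
    exact this
  have hcont : Continuous fun θ : ℝ => (a + b * Real.cos (2 * π * θ))⁻¹ := by
    apply Continuous.inv₀
    · fun_prop
    · exact fun t => (hpos _).ne'
  rw [intervalIntegral.integral_eq_sub_of_hasDerivAt (fun θ _ => hG θ)
    (hcont.intervalIntegrable 0 1)]
  simp [hG_def, Real.sin_two_pi, mul_one]

lemma ellK_integrand_integrable {z : ℝ} (hz : |z| < 1) :
    IntervalIntegrable (fun x => 1 / Real.sqrt ((1 - x ^ 2) * (1 - z ^ 2 * x ^ 2)))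
      volume 0 1 := by
  have hz2 : 0 < 1 - z ^ 2 := by nlinarith [le_abs_self z, neg_abs_le z, abs_nonneg z, sq_abs z]
  have hg : IntervalIntegrable (fun x : ℝ => (Real.sqrt (1 - z ^ 2))⁻¹ * (1 - x) ^ (-(1/2) : ℝ))
      volume 0 1 := by
    apply IntervalIntegrable.const_mul
    have h := intervalIntegrable_rpow' (a := 0) (b := 1) (r := -(1/2)) (by norm_num)
    simpa using (h.comp_sub_left 1).symm
  apply hg.mono_fun'
  · apply Measurable.aestronglyMeasurable
    exact (measurable_const.div ((((measurable_id.pow_const 2).const_sub 1).mul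
      (((measurable_id.pow_const 2).const_mul (z^2)).const_sub 1))).sqrt)
  · rw [Filter.EventuallyLE, ae_restrict_iff' measurableSet_uIoc]
    refine Filter.Eventually.of_forall fun x hx => ?_
    rw [Set.uIoc_of_le (by norm_num : (0:ℝ) ≤ 1)] at hx
    obtain ⟨hx0, hx1⟩ := hx
    have h1x : 0 ≤ 1 - x := by linarith
    have key : Real.sqrt ((1 - x) * (1 - z ^ 2)) ≤ Real.sqrt ((1 - x ^ 2) * (1 - z ^ 2 * x ^ 2)) := by
      apply Real.sqrt_le_sqrt
      have hxx : 1 - x ≤ 1 - x ^ 2 := by nlinarith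
      have hzz : 1 - z ^ 2 ≤ 1 - z ^ 2 * x ^ 2 := by nlinarith [sq_nonneg z, sq_nonneg x]
      nlinarith [sq_nonneg z, sq_nonneg x]
    have hrw : (1 - x) ^ (-(1/2) : ℝ) = (Real.sqrt (1 - x))⁻¹ := by
      rw [Real.rpow_neg h1x, Real.sqrt_eq_rpow]
    simp only [norm_eq_abs]
    rw [abs_of_nonneg (by positivity), hrw]
    rw [one_div]
    calc (Real.sqrt ((1 - x ^ 2) * (1 - z ^ 2 * x ^ 2)))⁻¹
        ≤ (Real.sqrt ((1 - x) * (1 - z ^ 2)))⁻¹ := by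
          rcases eq_or_lt_of_le h1x with h | h
          · rw [← h]
            have : x = 1 := by linarith
            subst this
            norm_num
          · exact inv_anti₀ (Real.sqrt_pos.2 (by positivity)) key
      _ = (Real.sqrt (1 - z ^ 2))⁻¹ * (Real.sqrt (1 - x))⁻¹ := by
          rw [Real.sqrt_mul h1x, mul_inv, mul_comm]

lemma stepE (k : ℝ) (hk : 4 < k) :
    (∫ ψ in (0:ℝ)..1, (Real.sqrt (k ^ 2 - (4 * Real.cos (π * ψ)) ^ 2))⁻¹)
      = 2 / (k * π) * ellK (4 / k) := by
  have hkpos : (0:ℝ) < k := by linarith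
  have hpi := Real.pi_pos
  set h : ℝ → ℝ := fun ψ => (Real.sqrt (k ^ 2 - (4 * Real.cos (π * ψ)) ^ 2))⁻¹ with hh
  set f : ℝ → ℝ := fun x => 1 / Real.sqrt ((1 - x ^ 2) * (1 - (4 / k) ^ 2 * x ^ 2)) with hf
  have hz : |4 / k| < 1 := by
    rw [abs_of_pos (by positivity)]
    rw [div_lt_one hkpos]; linarith
  have hfInt : IntervalIntegrable f volume 0 1 := ellK_integrand_integrable hz
  have hinner : ∀ ψ : ℝ, 0 < k ^ 2 - (4 * Real.cos (π * ψ)) ^ 2 := by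
    intro ψ
    have h1 : (Real.cos (π * ψ)) ^ 2 ≤ 1 := Real.cos_sq_le_one _
    nlinarith
  have hcont : Continuous h := by
    apply Continuous.inv₀
    · fun_prop
    · exact fun ψ => (Real.sqrt_pos.2 (hinner ψ)).ne'
  -- reflection: ∫₀¹ = 2 ∫₀^½
  have hrefl : (∫ ψ in (0:ℝ)..1, h ψ) = 2 * ∫ ψ in (0:ℝ)..(1/2), h ψ := by
    have hsym : (∫ ψ in (1/2:ℝ)..1, h ψ) = ∫ ψ in (0:ℝ)..(1/2), h ψ := by
      have e := intervalIntegral.integral_comp_sub_left (a := (0:ℝ)) (b := 1/2) h 1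
      rw [show (1:ℝ) - 1/2 = 1/2 by norm_num, show (1:ℝ) - 0 = 1 by norm_num] at e
      rw [← e]
      apply intervalIntegral.integral_congr
      intro ψ _
      simp only [hh]
      rw [mul_sub, mul_one, Real.cos_pi_sub]
      ring_nf
    rw [← intervalIntegral.integral_add_adjacent_intervals
      (hcont.intervalIntegrable 0 (1/2)) (hcont.intervalIntegrable (1/2) 1), hsym]
    ring
  -- substitution identity for b ∈ (0, 1/2]
  have hsub : ∀ b : ℝ, 0 < b → b ≤ 1/2 →
      (∫ ψ in b..(1/2:ℝ), h ψ) = (π * k)⁻¹ * ∫ x in (0:ℝ)..Real.cos (π * b), f x := by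
    intro b hb0 hb2
    have huIcc : Set.uIcc b (1/2:ℝ) = Set.Icc b (1/2) := Set.uIcc_of_le hb2
    have hsubst := intervalIntegral.integral_comp_smul_deriv'
      (a := b) (b := 1/2) (f := fun ψ => Real.cos (π * ψ))
      (f' := fun ψ => -π * Real.sin (π * ψ)) (g := f)
      (fun ψ _ => by
        have h1 : HasDerivAt (fun ψ : ℝ => π * ψ) π ψ := by
          simpa using (hasDerivAt_id ψ).const_mul π
        simpa [mul_comm] using h1.cos)
      (by fun_prop)
      ?contg
    case contg =>
      intro x hx
      obtain ⟨ψ, hψ, rfl⟩ := hx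
      rw [huIcc] at hψ
      have hψπ1 : 0 < π * ψ := mul_pos hpi (lt_of_lt_of_le hb0 hψ.1)
      have hψπ2 : π * ψ ≤ π / 2 := by
        calc π * ψ ≤ π * (1/2) := by nlinarith [hψ.2]
          _ = π / 2 := by ring
      have hsinp : 0 < Real.sin (π * ψ) :=
        Real.sin_pos_of_pos_of_lt_pi hψπ1 (by linarith)
      have hcos2 : Real.cos (π * ψ) ^ 2 < 1 := by
        nlinarith [Real.sin_sq_add_cos_sq (π * ψ)]
      apply ContinuousAt.continuousWithinAt
      apply ContinuousAt.div continuousAt_const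
      · fun_prop
      · have h2 : 0 < 1 - Real.cos (π * ψ) ^ 2 := by nlinarith
        have hz2 : (4/k)^2 * Real.cos (π * ψ) ^ 2 < 1 := by
          have h4k : 0 < 4/k := by positivity
          have : (4/k)^2 < 1 := by
            have := hz; rw [abs_of_pos h4k] at this; nlinarith
          nlinarith [sq_nonneg (Real.cos (π*ψ))]
        have : 0 < (1 - Real.cos (π * ψ) ^ 2) * (1 - (4/k)^2 * Real.cos (π * ψ) ^ 2) := by
          nlinarith
        exact (Real.sqrt_pos.2 this).ne'
    -- rewrite the left side of hsubst
    simp only [Function.comp] at hsubst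
    rw [show Real.cos (π * (1/2 : ℝ)) = 0 by rw [show π * (1/2 : ℝ) = π/2 by ring, Real.cos_pi_div_two]] at hsubst
    have hcongr : (∫ ψ in b..(1/2:ℝ), (-π * Real.sin (π * ψ)) • f (Real.cos (π * ψ)))
        = ∫ ψ in b..(1/2:ℝ), (-(π * k)) * h ψ := by
      apply intervalIntegral.integral_congr
      intro ψ hψ
      rw [huIcc] at hψ
      have hsin : 0 < Real.sin (π * ψ) := by
        apply Real.sin_pos_of_pos_of_lt_pi
        · exact mul_pos hpi (lt_of_lt_of_le hb0 hψ.1)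
        · nlinarith [hψ.2]
      have hssq : Real.sin (π * ψ) ^ 2 = 1 - Real.cos (π * ψ) ^ 2 := by
        nlinarith [Real.sin_sq_add_cos_sq (π * ψ)]
      have hsqrt1 : Real.sqrt (1 - Real.cos (π * ψ) ^ 2) = Real.sin (π * ψ) := by
        rw [← hssq]; exact Real.sqrt_sq hsin.le
    -- √((1−c²)(1−z²c²)) = sin · √(k²−16c²)/k
      have hfac : Real.sqrt ((1 - Real.cos (π * ψ) ^ 2) * (1 - (4/k)^2 * Real.cos (π * ψ) ^ 2))
          = Real.sin (π * ψ) * (Real.sqrt (k ^ 2 - (4 * Real.cos (π * ψ)) ^ 2) / k) := by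
        have e : 1 - (4/k)^2 * Real.cos (π * ψ) ^ 2
            = (k ^ 2 - (4 * Real.cos (π * ψ)) ^ 2) / k ^ 2 := by
          field_simp
        rw [Real.sqrt_mul (by nlinarith [Real.cos_sq_le_one (π * ψ)]), hsqrt1, e,
          Real.sqrt_div (hinner ψ).le, Real.sqrt_sq hkpos.le]
      simp only [hf, smul_eq_mul, one_div]
      rw [hfac]
      rw [mul_inv, hh]
      have : Real.sqrt (k ^ 2 - (4 * Real.cos (π * ψ)) ^ 2) > 0 := Real.sqrt_pos.2 (hinner ψ)
      field_simp
    rw [hcongr, intervalIntegral.integral_const_mul,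
      intervalIntegral.integral_symm 0 (Real.cos (π * b))] at hsubst
    have hπk : (0:ℝ) < π * k := by positivity
    field_simp
    linarith [hsubst]
  -- limits b → 0⁺
  have hprim : Continuous fun b : ℝ => ∫ ψ in (0:ℝ)..b, h ψ :=
    intervalIntegral.continuous_primitive (fun a b => hcont.intervalIntegrable a b) 0
  have hTL : Filter.Tendsto (fun b : ℝ => ∫ ψ in b..(1/2:ℝ), h ψ) (nhdsWithin 0 (Set.Ioi 0))
      (nhds (∫ ψ in (0:ℝ)..(1/2:ℝ), h ψ)) := by
    have hc : Continuous fun b : ℝ =>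
        (∫ ψ in (0:ℝ)..(1/2:ℝ), h ψ) - ∫ ψ in (0:ℝ)..b, h ψ := continuous_const.sub hprim
    have ht := (hc.tendsto 0).mono_left (nhdsWithin_le_nhds (s := Set.Ioi (0:ℝ)))
    simp only [intervalIntegral.integral_same, sub_zero] at ht
    apply ht.congr
    intro b
    exact intervalIntegral.integral_interval_sub_left
      (hcont.intervalIntegrable 0 (1/2)) (hcont.intervalIntegrable 0 b)
  have hInt' : IntegrableOn f (Set.uIcc 0 1) volume := by
    rw [Set.uIcc_of_le (by norm_num : (0:ℝ) ≤ 1)]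
    exact (intervalIntegrable_iff_integrableOn_Icc_of_le (by norm_num)).1 hfInt
  have hcw : ContinuousWithinAt (fun y => ∫ x in (0:ℝ)..y, f x) (Set.uIcc 0 1) 1 := by
    apply intervalIntegral.continuousOn_primitive_interval hInt'
    rw [Set.uIcc_of_le (by norm_num : (0:ℝ) ≤ 1)]
    exact ⟨by norm_num, le_refl 1⟩
  have hcosT : Filter.Tendsto (fun b : ℝ => Real.cos (π * b)) (nhdsWithin 0 (Set.Ioi 0))
      (nhdsWithin 1 (Set.uIcc 0 1)) := by
    apply tendsto_nhdsWithin_of_tendsto_nhds_of_eventually_within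
    · have hcc : Continuous fun b : ℝ => Real.cos (π * b) := by fun_prop
      have := (hcc.tendsto 0).mono_left (nhdsWithin_le_nhds (s := Set.Ioi (0:ℝ)))
      simpa using this
    · filter_upwards [Ioo_mem_nhdsGT (by norm_num : (0:ℝ) < 1/2)] with b hb
      rw [Set.uIcc_of_le (by norm_num : (0:ℝ) ≤ 1)]
      refine ⟨?_, Real.cos_le_one _⟩
      apply Real.cos_nonneg_of_mem_Icc
      constructor
      · nlinarith [hb.1]
      · nlinarith [hb.2]
  have hTR : Filter.Tendsto
      (fun b : ℝ => (π * k)⁻¹ * ∫ x in (0:ℝ)..Real.cos (π * b), f x)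
      (nhdsWithin 0 (Set.Ioi 0)) (nhds ((π * k)⁻¹ * ∫ x in (0:ℝ)..1, f x)) :=
    (hcw.tendsto.comp hcosT).const_mul _
  have hEq : (fun b : ℝ => ∫ ψ in b..(1/2:ℝ), h ψ)
      =ᶠ[nhdsWithin 0 (Set.Ioi 0)]
      (fun b => (π * k)⁻¹ * ∫ x in (0:ℝ)..Real.cos (π * b), f x) := by
    filter_upwards [Ioo_mem_nhdsGT (by norm_num : (0:ℝ) < 1/2)] with b hb
    exact hsub b hb.1 hb.2.le
  have hlim : (∫ ψ in (0:ℝ)..(1/2:ℝ), h ψ) = (π * k)⁻¹ * ∫ x in (0:ℝ)..1, f x :=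
    tendsto_nhds_unique (hTL.congr' hEq) hTR
  rw [hrefl, hlim]
  rw [show ellK (4 / k) = ∫ x in (0:ℝ)..1, f x from rfl]
  rw [show ((2:ℝ) / (k * π)) = 2 * (π * k)⁻¹ by field_simp]
  ring


-- abs evaluation lemma
lemma exp_add_inv_eq (t : ℝ) :
    Complex.exp (2 * Real.pi * Complex.I * t) + (Complex.exp (2 * Real.pi * Complex.I * t))⁻¹
      = ((2 * Real.cos (2 * Real.pi * t) : ℝ) : ℂ) := by
  rw [← Complex.exp_neg]
  have e : (2 * Real.pi * Complex.I * t) = ((2 * Real.pi * t : ℝ) : ℂ) * Complex.I := by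
    push_cast; ring
  rw [e, ← neg_mul]
  rw [Complex.exp_mul_I, Complex.exp_mul_I, Complex.cos_neg, Complex.sin_neg,
    ← Complex.ofReal_cos]
  push_cast
  ring

lemma abs_eval (x θ φ : ℝ) (hx : 4 < x) :
    Norm.norm
      (Complex.exp (2 * Real.pi * Complex.I * θ) +
        (Complex.exp (2 * Real.pi * Complex.I * θ))⁻¹ +
       Complex.exp (2 * Real.pi * Complex.I * φ) +
        (Complex.exp (2 * Real.pi * Complex.I * φ))⁻¹ + (x : ℂ))
      = x + 2 * Real.cos (2 * Real.pi * θ) + 2 * Real.cos (2 * Real.pi * φ) := by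
  have e : Complex.exp (2 * Real.pi * Complex.I * θ) +
        (Complex.exp (2 * Real.pi * Complex.I * θ))⁻¹ +
       Complex.exp (2 * Real.pi * Complex.I * φ) +
        (Complex.exp (2 * Real.pi * Complex.I * φ))⁻¹ + (x : ℂ)
      = ((x + 2 * Real.cos (2 * Real.pi * θ) + 2 * Real.cos (2 * Real.pi * φ) : ℝ) : ℂ) := by
    have h1 := exp_add_inv_eq θ
    have h2 := exp_add_inv_eq φ
    push_cast at h1 h2 ⊢
    linear_combination h1 + h2
  rw [e, Complex.norm_real, Real.norm_eq_abs]
  have hc1 := Real.neg_one_le_cos (2 * Real.pi * θ)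
  have hc2 := Real.neg_one_le_cos (2 * Real.pi * φ)
  rw [abs_of_pos (by nlinarith)]

lemma shift_integral (w : ℝ → ℝ) (hper : Function.Periodic w 1) (c : ℝ) :
    ∫ x in (0:ℝ)..1, w (x - c) = ∫ x in (0:ℝ)..1, w x := by
  rw [intervalIntegral.integral_comp_sub_right w c]
  have h := hper.intervalIntegral_add_eq (-c) 0
  rw [show (0:ℝ) - c = -c by ring, show (1:ℝ) - c = -c + 1 by ring]
  simpa using h

lemma cos_helper (u v : ℝ) :
    2 * Real.cos (u + v) + 2 * Real.cos (v - u) = 4 * Real.cos v * Real.cos u := by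
  rw [Real.cos_add, Real.cos_sub]; ring

lemma denom_pos {x A B : ℝ} (hx : 4 < x) :
    0 < x + 2 * Real.cos A + 2 * Real.cos B := by
  nlinarith [Real.neg_one_le_cos A, Real.neg_one_le_cos B]

-- the inner 1D integral for fixed ψ
lemma inner_theta (k ψ : ℝ) (hk : 4 < k) :
    (∫ θ in (0:ℝ)..1, (k + 2 * Real.cos (2 * π * θ) + 2 * Real.cos (2 * π * (ψ - θ)))⁻¹)
      = (Real.sqrt (k ^ 2 - (4 * Real.cos (π * ψ)) ^ 2))⁻¹ := by
  set b := 4 * Real.cos (π * ψ) with hb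
  have hbk : |b| < k := by
    rw [hb, abs_mul, abs_of_pos (by norm_num : (0:ℝ) < 4)]
    nlinarith [Real.abs_cos_le_one (π * ψ)]
  set W : ℝ → ℝ := fun u => (k + b * Real.cos (2 * π * u))⁻¹ with hW
  have hWper : Function.Periodic W 1 := by
    intro u
    simp only [hW]
    rw [mul_add, mul_one, Real.cos_add_two_pi]
  have hpt : ∀ θ : ℝ, (k + 2 * Real.cos (2 * π * θ) + 2 * Real.cos (2 * π * (ψ - θ)))⁻¹
      = W (θ - ψ / 2) := by
    intro θ
    have hc : 2 * Real.cos (2 * π * θ) + 2 * Real.cos (2 * π * (ψ - θ))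
        = b * Real.cos (2 * π * (θ - ψ / 2)) := by
      have h := cos_helper (2 * π * θ - π * ψ) (π * ψ)
      rw [show 2 * π * θ - π * ψ + π * ψ = 2 * π * θ by ring,
        show π * ψ - (2 * π * θ - π * ψ) = 2 * π * (ψ - θ) by ring] at h
      rw [hb, show 2 * π * (θ - ψ / 2) = 2 * π * θ - π * ψ by ring]
      linarith [h]
    rw [hW]
    simp only []
    rw [← hc]
    ring_nf
  rw [intervalIntegral.integral_congr (fun θ _ => hpt θ), shift_integral W hWper (ψ / 2)]
  exact key1D k b hbk

/-- `f(k) = m(P_{1,k})` is differentiable on `(4,∞)` with `f′(k) = (2/(kπ))·K(4/k)`. -/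
theorem mahlerP1_hasDerivAt (k : ℝ) (hk : 4 < k) :
    HasDerivAt mahlerP1 (2 / (k * Real.pi) * ellK (4 / k)) k := by
  have hpi := Real.pi_pos
  set μ : Measure ℝ := volume.restrict (Set.Ioc 0 1) with hμ
  haveI hμfin : IsFiniteMeasure μ := by
    constructor
    rw [hμ, Measure.restrict_apply_univ]
    exact measure_Ioc_lt_top
  set F : ℝ → ℝ × ℝ → ℝ := fun x p =>
    Real.log (x + 2 * Real.cos (2 * π * p.1) + 2 * Real.cos (2 * π * p.2)) with hF
  set F' : ℝ → ℝ × ℝ → ℝ := fun x p =>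
    (x + 2 * Real.cos (2 * π * p.1) + 2 * Real.cos (2 * π * p.2))⁻¹ with hF'
  have hgcont : ∀ x : ℝ, Continuous fun p : ℝ × ℝ =>
      x + 2 * Real.cos (2 * π * p.1) + 2 * Real.cos (2 * π * p.2) := by
    intro x; fun_prop
  have hFcont : ∀ x : ℝ, 4 < x → Continuous (F x) := by
    intro x hx
    exact (hgcont x).log fun p => (denom_pos hx).ne'
  have hF'cont : ∀ x : ℝ, 4 < x → Continuous (F' x) := fun x hx =>
    (hgcont x).inv₀ fun p => (denom_pos hx).ne'
  have hFint : ∀ x : ℝ, 4 < x → Integrable (F x) (μ.prod μ) := by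
    intro x hx
    apply Integrable.mono' (integrable_const (|Real.log (x - 4)| + |Real.log (x + 4)|))
      (hFcont x hx).aestronglyMeasurable
    refine Filter.Eventually.of_forall fun p => ?_
    have hc1 := Real.neg_one_le_cos (2 * π * p.1)
    have hc2 := Real.neg_one_le_cos (2 * π * p.2)
    have hc1' := Real.cos_le_one (2 * π * p.1)
    have hc2' := Real.cos_le_one (2 * π * p.2)
    have ht1 : x - 4 ≤ x + 2 * Real.cos (2 * π * p.1) + 2 * Real.cos (2 * π * p.2) := by linarith
    have ht2 : x + 2 * Real.cos (2 * π * p.1) + 2 * Real.cos (2 * π * p.2) ≤ x + 4 := by linarith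
    have hx4 : (0:ℝ) < x - 4 := by linarith
    have h1 : Real.log (x + 2 * Real.cos (2 * π * p.1) + 2 * Real.cos (2 * π * p.2))
        ≤ Real.log (x + 4) := by gcongr <;> linarith
    have h2 : Real.log (x - 4)
        ≤ Real.log (x + 2 * Real.cos (2 * π * p.1) + 2 * Real.cos (2 * π * p.2)) := by
      gcongr
    rw [norm_eq_abs]
    rw [abs_le]
    constructor
    · have := neg_abs_le (Real.log (x - 4)); have := abs_nonneg (Real.log (x + 4)); linarith
    · have := le_abs_self (Real.log (x + 4)); have := abs_nonneg (Real.log (x - 4)); linarith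
  have hF'int : ∀ x : ℝ, 4 < x → Integrable (F' x) (μ.prod μ) := by
    intro x hx
    apply Integrable.mono' (integrable_const (x - 4)⁻¹)
      (hF'cont x hx).aestronglyMeasurable
    refine Filter.Eventually.of_forall fun p => ?_
    have hc1 := Real.neg_one_le_cos (2 * π * p.1)
    have hc2 := Real.neg_one_le_cos (2 * π * p.2)
    have hx4 : (0:ℝ) < x - 4 := by linarith
    rw [norm_eq_abs, abs_of_pos (inv_pos.2 (denom_pos hx))]
    apply inv_anti₀ hx4
    linarith
  -- differentiation under the integral sign
  have hball : ∀ x ∈ Metric.ball k ((k - 4) / 2), 4 < x := by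
    intro x hx
    rw [Metric.mem_ball, Real.dist_eq, abs_sub_lt_iff] at hx
    linarith [hx.1, hx.2]
  have key := hasDerivAt_integral_of_dominated_loc_of_deriv_le
    (μ := μ.prod μ) (F := F) (F' := F') (x₀ := k)
    (bound := fun _ => ((k - 4) / 2)⁻¹)
    (Metric.ball_mem_nhds k (by linarith : (0:ℝ) < (k - 4) / 2))
    (by
      filter_upwards [isOpen_Ioi.mem_nhds hk] with x hx
      exact (hFcont x hx).aestronglyMeasurable)
    (hFint k hk)
    ((hF'cont k hk).aestronglyMeasurable)
    (by
      refine Filter.Eventually.of_forall fun p => fun x hx => ?_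
      have hx4 := hball x hx
      have hc1 := Real.neg_one_le_cos (2 * π * p.1)
      have hc2 := Real.neg_one_le_cos (2 * π * p.2)
      rw [Real.norm_eq_abs, abs_of_pos (inv_pos.2 (denom_pos hx4))]
      apply inv_anti₀ (by linarith)
      rw [Metric.mem_ball, Real.dist_eq, abs_sub_lt_iff] at hx
      linarith [hx.1, hx.2])
    (integrable_const _)
    (by
      refine Filter.Eventually.of_forall fun p => fun x hx => ?_
      have hx4 := hball x hx
      have hd : HasDerivAt (fun x : ℝ =>
          x + 2 * Real.cos (2 * π * p.1) + 2 * Real.cos (2 * π * p.2)) 1 x := by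
        simpa using ((hasDerivAt_id x).add_const
          (2 * Real.cos (2 * π * p.1))).add_const (2 * Real.cos (2 * π * p.2))
      have := hd.log (denom_pos hx4).ne'
      simpa [hF, hF', one_div] using this)
  -- identify mahlerP1 with the parametric integral near k
  have hcongr : ∀ x ∈ Set.Ioi (4:ℝ), mahlerP1 x = ∫ p, F x p ∂(μ.prod μ) := by
    intro x hx
    have h1 : mahlerP1 x = ∫ θ in (0:ℝ)..1, ∫ φ in (0:ℝ)..1, F x (θ, φ) := by
      unfold mahlerP1
      apply intervalIntegral.integral_congr
      intro θ _
      apply intervalIntegral.integral_congr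
      intro φ _
      simp only [hF]
      rw [abs_eval x θ φ hx]
    rw [h1, MeasureTheory.integral_prod _ (hFint x hx)]
    rw [intervalIntegral.integral_of_le (by norm_num : (0:ℝ) ≤ 1)]
    apply MeasureTheory.integral_congr_ae
    refine Filter.Eventually.of_forall fun θ => ?_
    exact intervalIntegral.integral_of_le (by norm_num : (0:ℝ) ≤ 1)
  -- compute the derivative integral
  have hderiv_val : (∫ p, F' k p ∂(μ.prod μ)) = 2 / (k * π) * ellK (4 / k) := by
    set S : ℝ × ℝ → ℝ := fun p =>
      (k + 2 * Real.cos (2 * π * p.1) + 2 * Real.cos (2 * π * (p.2 - p.1)))⁻¹ with hS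
    have hScont : Continuous S := by
      apply Continuous.inv₀
      · fun_prop
      · intro p; exact (denom_pos hk).ne'
    have hSint : Integrable S (μ.prod μ) := by
      apply Integrable.mono' (integrable_const (k - 4)⁻¹) hScont.aestronglyMeasurable
      refine Filter.Eventually.of_forall fun p => ?_
      have hc1 := Real.neg_one_le_cos (2 * π * p.1)
      have hc2 := Real.neg_one_le_cos (2 * π * (p.2 - p.1))
      rw [norm_eq_abs, abs_of_pos (inv_pos.2 (denom_pos hk))]
      apply inv_anti₀ (by linarith)
      linarith
    have hshift : ∀ θ : ℝ, (∫ φ, F' k (θ, φ) ∂μ) = ∫ ψ, S (θ, ψ) ∂μ := by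
      intro θ
      set w : ℝ → ℝ := fun u => (k + 2 * Real.cos (2 * π * θ) + 2 * Real.cos (2 * π * u))⁻¹
        with hw
      have hwper : Function.Periodic w 1 := by
        intro u
        simp only [hw]
        rw [mul_add, mul_one, Real.cos_add_two_pi]
      rw [← intervalIntegral.integral_of_le (by norm_num : (0:ℝ) ≤ 1),
        ← intervalIntegral.integral_of_le (by norm_num : (0:ℝ) ≤ 1)]
      exact (shift_integral w hwper θ).symm
    rw [MeasureTheory.integral_prod _ (hF'int k hk)]
    rw [MeasureTheory.integral_congr_ae (Filter.Eventually.of_forall hshift)]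
    rw [← MeasureTheory.integral_prod _ hSint, MeasureTheory.integral_prod_symm _ hSint]
    have hinner : ∀ ψ : ℝ, (∫ θ, S (θ, ψ) ∂μ)
        = (Real.sqrt (k ^ 2 - (4 * Real.cos (π * ψ)) ^ 2))⁻¹ := by
      intro ψ
      rw [← intervalIntegral.integral_of_le (by norm_num : (0:ℝ) ≤ 1)]
      exact inner_theta k ψ hk
    rw [MeasureTheory.integral_congr_ae (Filter.Eventually.of_forall hinner),
      ← intervalIntegral.integral_of_le (by norm_num : (0:ℝ) ≤ 1)]
    exact stepE k hk
  have hDeriv : HasDerivAt (fun x => ∫ p, F x p ∂(μ.prod μ))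
      (2 / (k * π) * ellK (4 / k)) k := hderiv_val ▸ key.2
  apply hDeriv.congr_of_eventuallyEq
  filter_upwards [isOpen_Ioi.mem_nhds hk] with x hx
  exact hcongr x hx
end

section
/- For every real k > 2(1+√5), the half-Mahler measure m⁻(P̃_k) equals 0; consequently m⁺(P̃_k) − m⁻(P̃_k) = m(P̃_k). -/
open Real MeasureTheory Filter

lemma contg (a : ℂ) (ha : ‖a‖ < 1) :
    Continuous fun t : ℝ => Complex.log (1 - a * Complex.exp (t * Complex.I)) := by
  rw [continuous_iff_continuousAt]
  intro t
  have h1 : Continuous fun t : ℝ => (1 : ℂ) - a * Complex.exp (t * Complex.I) := by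
    continuity
  apply ContinuousAt.clog h1.continuousAt
  left
  have h2 : ‖a * Complex.exp (t * Complex.I)‖ < 1 := by
    rw [norm_mul, Complex.norm_exp]
    simp [ha]
  have h3 := (Complex.abs_re_le_norm (a * Complex.exp (t * Complex.I))).trans_lt h2
  have h4 : (a * Complex.exp (t * Complex.I)).re < 1 :=
    lt_of_le_of_lt (le_abs_self _) h3
  simp only [Complex.sub_re, Complex.one_re]
  linarith

lemma cauchy0 (a : ℂ) (ha : ‖a‖ < 1) :
    ∫ t in (0:ℝ)..(2*π), Complex.log (1 - a * Complex.exp (t * Complex.I)) = 0 := by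
  set f : ℂ → ℂ := fun z => Complex.log (1 - a * z) with hf
  have hdiff : DifferentiableOn ℂ f (Metric.closedBall 0 1) := by
    apply DifferentiableOn.clog
    · exact (differentiable_const (1:ℂ) |>.sub ((differentiable_id.const_mul a))).differentiableOn
    · intro z hz
      left
      simp only [Metric.mem_closedBall, dist_zero_right] at hz
      have h2 : ‖a * z‖ < 1 := by
        rw [norm_mul]
        calc ‖a‖ * ‖z‖ ≤ ‖a‖ * 1 :=
          mul_le_mul_of_nonneg_left (by simpa using hz) (norm_nonneg a)
        _ < 1 := by simpa using ha
      have h3 := (Complex.abs_re_le_norm (a * z)).trans_lt h2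
      have h4 : (a * z).re < 1 := lt_of_le_of_lt (le_abs_self _) h3
      simp only [Complex.sub_re, Complex.one_re]
      linarith
  have hdc : DiffContOnCl ℂ f (Metric.ball 0 1) := by
    apply DifferentiableOn.diffContOnCl
    rwa [closure_ball (0:ℂ) one_ne_zero]
  have hC := hdc.circleIntegral_sub_inv_smul (w := 0) (by simp)
  have hf0 : f 0 = 0 := by simp [hf]
  rw [hf0, smul_zero] at hC
  rw [circleIntegral] at hC
  simp only [deriv_circleMap, sub_zero] at hC
  have hrw : ∀ t : ℝ, (circleMap 0 1 t * Complex.I) • ((circleMap 0 1 t)⁻¹ • f (circleMap 0 1 t))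
      = Complex.I * f (circleMap 0 1 t) := by
    intro t
    have : circleMap 0 1 t ≠ 0 := circleMap_ne_center one_ne_zero
    rw [smul_eq_mul, smul_eq_mul]; rw [mul_comm (circleMap 0 1 t) Complex.I, mul_assoc, ← mul_assoc (circleMap 0 1 t), mul_inv_cancel₀ this, one_mul]
  rw [intervalIntegral.integral_congr (fun t _ => hrw t)] at hC
  rw [intervalIntegral.integral_const_mul] at hC
  have := mul_eq_zero.1 hC
  rcases this with h | h
  · exact absurd h Complex.I_ne_zero
  · calc ∫ t in (0:ℝ)..(2*π), Complex.log (1 - a * Complex.exp (t * Complex.I))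
        = ∫ t in (0:ℝ)..(2*π), f (circleMap 0 1 t) := by
          apply intervalIntegral.integral_congr
          intro t _
          simp [hf, circleMap]
    _ = 0 := h

lemma jensenA (a : ℝ) (ha : |a| < 1) :
    ∫ φ in (0:ℝ)..1,
      Real.log (‖1 - (a:ℂ) * Complex.exp (2*(π:ℂ)*Complex.I*(φ:ℝ))‖) = 0 := by
  have ha' : ‖(a:ℂ)‖ < 1 := by rwa [Complex.norm_real, Real.norm_eq_abs]
  have hrw : ∀ φ : ℝ, (2*(π:ℂ)*Complex.I*(φ:ℝ)) = ((2*π*φ : ℝ) : ℂ) * Complex.I := by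
    intro φ; push_cast; ring
  have hF : ∀ t : ℝ, Real.log (‖1 - (a:ℂ) * Complex.exp ((t:ℂ) * Complex.I)‖)
      = (Complex.log (1 - (a:ℂ) * Complex.exp ((t:ℂ) * Complex.I))).re := by
    intro t; rw [Complex.log_re]
  have hcomp : (∫ φ in (0:ℝ)..1,
      Real.log (‖1 - (a:ℂ) * Complex.exp (2*(π:ℂ)*Complex.I*(φ:ℝ))‖))
      = ∫ φ in (0:ℝ)..1,
        Real.log (‖1 - (a:ℂ) * Complex.exp (((2*π*φ : ℝ):ℂ) * Complex.I)‖) := by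
    apply intervalIntegral.integral_congr
    intro φ _
    simp only [hrw φ]
  rw [hcomp,
    intervalIntegral.integral_comp_mul_left
      (fun t : ℝ => Real.log (‖1 - (a:ℂ) * Complex.exp ((t:ℂ) * Complex.I)‖))
      (by positivity : (2*π:ℝ) ≠ 0)]
  have hint : IntervalIntegrable
      (fun t : ℝ => Complex.log (1 - (a:ℂ) * Complex.exp ((t:ℂ) * Complex.I)))
      volume 0 (2*π) := (contg a ha').intervalIntegrable _ _
  have := Complex.reCLM.intervalIntegral_comp_comm hint
  simp only [Complex.reCLM_apply] at this
  have h2 : (∫ t in (0:ℝ)..(2*π),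
      Real.log (‖1 - (a:ℂ) * Complex.exp ((t:ℂ) * Complex.I)‖)) = 0 := by
    rw [intervalIntegral.integral_congr (fun t _ => hF t), this, cauchy0 a ha']
    simp
  simp only [mul_one, mul_zero]
  rw [h2]
  simp

lemma exp_abs_one (φ : ℝ) : ‖Complex.exp (2*(π:ℂ)*Complex.I*(φ:ℝ))‖ = 1 := by
  have : (2*(π:ℂ)*Complex.I*(φ:ℝ)) = ((2*π*φ : ℝ) : ℂ) * Complex.I := by push_cast; ring
  rw [this, Complex.norm_exp_ofReal_mul_I]

lemma abs_sub_eq (a : ℝ) (φ : ℝ) :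
    ‖Complex.exp (2*(π:ℂ)*Complex.I*(φ:ℝ)) - (a:ℂ)‖
      = ‖1 - (a:ℂ) * Complex.exp (2*(π:ℂ)*Complex.I*(φ:ℝ))‖ := by
  set w := Complex.exp (2*(π:ℂ)*Complex.I*(φ:ℝ)) with hw
  have hw0 : w ≠ 0 := Complex.exp_ne_zero _
  have hwa : ‖w‖ = 1 := exp_abs_one φ
  have hconj : (starRingEnd ℂ) w = w⁻¹ := by
    rw [hw, ← Complex.exp_conj, ← Complex.exp_neg]
    congr 1
    simp [Complex.ext_iff]
  calc ‖w - a‖ = ‖(starRingEnd ℂ) (w - a)‖ := (Complex.norm_conj _).symm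
    _ = ‖w⁻¹ - a‖ := by rw [map_sub, hconj, Complex.conj_ofReal]
    _ = ‖w⁻¹ * (1 - (a:ℂ) * w)‖ := by
        congr 1
        field_simp
    _ = ‖w⁻¹‖ * ‖1 - (a:ℂ) * w‖ := norm_mul _ _
    _ = ‖1 - (a:ℂ) * w‖ := by rw [norm_inv, hwa]; simp

lemma contlog (c : ℂ) (hc : ‖c‖ ≠ 1) :
    Continuous fun φ : ℝ => Real.log (‖Complex.exp (2*(π:ℂ)*Complex.I*(φ:ℝ)) - c‖) := by
  have h1 : Continuous fun φ : ℝ => ‖Complex.exp (2*(π:ℂ)*Complex.I*(φ:ℝ)) - c‖ := by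
    continuity
  rw [continuous_iff_continuousAt]
  intro φ
  have hne : ‖Complex.exp (2*(π:ℂ)*Complex.I*(φ:ℝ)) - c‖ ≠ 0 := by
    intro h
    rw [norm_eq_zero, sub_eq_zero] at h
    exact hc (h ▸ exp_abs_one φ)
  exact h1.continuousAt.log hne

lemma jensen_in (a : ℝ) (ha : |a| < 1) :
    ∫ φ in (0:ℝ)..1,
      Real.log (‖Complex.exp (2*(π:ℂ)*Complex.I*(φ:ℝ)) - (a:ℂ)‖) = 0 := by
  rw [intervalIntegral.integral_congr (g := fun φ : ℝ =>
    Real.log (‖1 - (a:ℂ) * Complex.exp (2*(π:ℂ)*Complex.I*(φ:ℝ))‖))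
    (fun φ _ => by rw [abs_sub_eq])]
  exact jensenA a ha

lemma jensen_out (y : ℝ) (hy : 1 < y) :
    ∫ φ in (0:ℝ)..1,
      Real.log (‖Complex.exp (2*(π:ℂ)*Complex.I*(φ:ℝ)) - (y:ℂ)‖) = Real.log y := by
  have hy0 : (0:ℝ) < y := by linarith
  have hinv : |y⁻¹| < 1 := by
    rw [abs_of_pos (by positivity)]
    rw [inv_lt_one_iff₀]
    right; exact hy
  have hpt : ∀ φ : ℝ,
      Real.log (‖Complex.exp (2*(π:ℂ)*Complex.I*(φ:ℝ)) - (y:ℂ)‖)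
        = Real.log y +
          Real.log (‖Complex.exp (2*(π:ℂ)*Complex.I*(φ:ℝ)) - ((y⁻¹:ℝ):ℂ)‖) := by
    intro φ
    set w := Complex.exp (2*(π:ℂ)*Complex.I*(φ:ℝ)) with hwdef
    have hfac : w - (y:ℂ) = (y:ℂ) * (((y⁻¹:ℝ):ℂ) * w - 1) := by
      have : (y:ℂ) ≠ 0 := by exact_mod_cast hy0.ne'
      rw [mul_sub, ← mul_assoc, Complex.ofReal_inv, mul_inv_cancel₀ this, one_mul, mul_one]
    have habs : ‖w - (y:ℂ)‖ = y * ‖w - ((y⁻¹:ℝ):ℂ)‖ := by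
      rw [hfac, norm_mul, Complex.norm_real, Real.norm_eq_abs, abs_of_pos hy0]
      congr 1
      have : ((y⁻¹:ℝ):ℂ) * w - 1 = -(1 - ((y⁻¹:ℝ):ℂ) * w) := by ring
      rw [this, norm_neg, ← abs_sub_eq]
    rw [habs, Real.log_mul hy0.ne']
    intro h
    rw [norm_eq_zero, sub_eq_zero] at h
    have := exp_abs_one φ
    rw [← hwdef, h, Complex.norm_real, Real.norm_eq_abs, abs_of_pos (by positivity : (0:ℝ) < y⁻¹)] at this
    rw [this] at hinv
    simp at hinv
  rw [intervalIntegral.integral_congr (fun φ _ => hpt φ)]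
  have hint : IntervalIntegrable (fun φ : ℝ =>
      Real.log (‖Complex.exp (2*(π:ℂ)*Complex.I*(φ:ℝ)) - ((y⁻¹:ℝ):ℂ)‖)) volume 0 1 := by
    apply Continuous.intervalIntegrable
    apply contlog
    rw [Complex.norm_real, Real.norm_eq_abs]
    exact hinv.ne
  rw [intervalIntegral.integral_add intervalIntegrable_const hint,
    jensen_in _ hinv]
  simp

lemma inner_int (b : ℝ) (hb : b < 0) :
    ∫ φ in (0:ℝ)..1,
      Real.log (‖(b:ℂ) + Complex.exp (2*(π:ℂ)*Complex.I*(φ:ℝ))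
        - (Complex.exp (2*(π:ℂ)*Complex.I*(φ:ℝ)))⁻¹‖)
      = Real.log ((-b + Real.sqrt (b^2+4))/2) := by
  set s := Real.sqrt (b^2+4) with hsdef
  have hs2 : s^2 = b^2+4 := Real.sq_sqrt (by positivity)
  have hs0 : 0 ≤ s := Real.sqrt_nonneg _
  set yp := (-b + s)/2 with hypdef
  set ym := (-b - s)/2 with hymdef
  have hyp1 : 1 < yp := by rw [hypdef]; nlinarith
  have hym : |ym| < 1 := by
    rw [abs_lt]
    constructor <;> [skip; skip] <;> rw [hymdef] <;> nlinarith
  have hsum : yp + ym = -b := by rw [hypdef, hymdef]; ring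
  have hprod : yp * ym = -1 := by
    have : yp * ym = ((-b)^2 - s^2)/4 := by rw [hypdef, hymdef]; ring
    rw [this, hs2]; ring
  have hsC : (yp:ℂ) + (ym:ℂ) = -(b:ℂ) := by
    rw [← Complex.ofReal_add, hsum, Complex.ofReal_neg]
  have hpC : (yp:ℂ) * (ym:ℂ) = -1 := by
    rw [← Complex.ofReal_mul, hprod]; norm_num
  have hpt : ∀ φ : ℝ,
      Real.log (‖(b:ℂ) + Complex.exp (2*(π:ℂ)*Complex.I*(φ:ℝ))
        - (Complex.exp (2*(π:ℂ)*Complex.I*(φ:ℝ)))⁻¹‖)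
      = Real.log (‖Complex.exp (2*(π:ℂ)*Complex.I*(φ:ℝ)) - (yp:ℂ)‖)
        + Real.log (‖Complex.exp (2*(π:ℂ)*Complex.I*(φ:ℝ)) - (ym:ℂ)‖) := by
    intro φ
    set w := Complex.exp (2*(π:ℂ)*Complex.I*(φ:ℝ)) with hwdef
    have hw0 : w ≠ 0 := Complex.exp_ne_zero _
    have hwa : ‖w‖ = 1 := exp_abs_one φ
    have hfac : w * ((b:ℂ) + w - w⁻¹) = (w - (yp:ℂ)) * (w - (ym:ℂ)) := by
      have expand : (w - (yp:ℂ)) * (w - (ym:ℂ))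
          = w^2 - ((yp:ℂ) + (ym:ℂ)) * w + (yp:ℂ) * (ym:ℂ) := by ring
      rw [expand, hsC, hpC]
      field_simp
      ring
    have habs : ‖(b:ℂ) + w - w⁻¹‖
        = ‖w - (yp:ℂ)‖ * ‖w - (ym:ℂ)‖ := by
      rw [← norm_mul, ← hfac, norm_mul, hwa, one_mul]
    have hne1 : ‖w - (yp:ℂ)‖ ≠ 0 := by
      intro h
      rw [norm_eq_zero, sub_eq_zero] at h
      rw [h, Complex.norm_real, Real.norm_eq_abs, abs_of_pos (by linarith)] at hwa
      linarith
    have hne2 : ‖w - (ym:ℂ)‖ ≠ 0 := by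
      intro h
      rw [norm_eq_zero, sub_eq_zero] at h
      rw [h, Complex.norm_real, Real.norm_eq_abs] at hwa
      rw [hwa] at hym
      simp at hym
    rw [habs, Real.log_mul hne1 hne2]
  rw [intervalIntegral.integral_congr (fun φ _ => hpt φ)]
  have hint1 : IntervalIntegrable (fun φ : ℝ =>
      Real.log (‖Complex.exp (2*(π:ℂ)*Complex.I*(φ:ℝ)) - (yp:ℂ)‖)) volume 0 1 := by
    apply Continuous.intervalIntegrable
    apply contlog
    rw [Complex.norm_real, Real.norm_eq_abs, abs_of_pos (by linarith)]
    linarith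
  have hint2 : IntervalIntegrable (fun φ : ℝ =>
      Real.log (‖Complex.exp (2*(π:ℂ)*Complex.I*(φ:ℝ)) - (ym:ℂ)‖)) volume 0 1 := by
    apply Continuous.intervalIntegrable
    apply contlog
    rw [Complex.norm_real, Real.norm_eq_abs]
    exact hym.ne
  rw [intervalIntegral.integral_add hint1 hint2, jensen_out yp hyp1, jensen_in ym hym]
  simp

lemma yp_gt (b : ℝ) (hb : b < 0) : 1 < (-b + Real.sqrt (b^2+4))/2 := by
  have hs2 : (Real.sqrt (b^2+4))^2 = b^2+4 := Real.sq_sqrt (by positivity)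
  have hs0 : 0 ≤ Real.sqrt (b^2+4) := Real.sqrt_nonneg _
  nlinarith

lemma ym_lt (b : ℝ) (hb : b < 0) : |(-b - Real.sqrt (b^2+4))/2| < 1 := by
  have hs2 : (Real.sqrt (b^2+4))^2 = b^2+4 := Real.sq_sqrt (by positivity)
  have hs0 : 0 ≤ Real.sqrt (b^2+4) := Real.sqrt_nonneg _
  rw [abs_lt]
  constructor <;> nlinarith

lemma Bt_neg (k : ℝ) (hk : 2 * (1 + Real.sqrt 5) < k) (θ : ℝ) : Bt k θ < 0 := by
  have h5 : (2:ℝ) < Real.sqrt 5 := by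
    nlinarith [Real.sq_sqrt (by norm_num : (5:ℝ) ≥ 0), Real.sqrt_nonneg 5]
  have hk4 : (4:ℝ) < k := by linarith
  have hc : 0 < Real.sqrt (k-4) := Real.sqrt_pos.2 (by linarith)
  have hu0 : 0 ≤ Real.sqrt (k+4) := Real.sqrt_nonneg _
  have hu2 : (Real.sqrt (k+4))^2 = k+4 := Real.sq_sqrt (by linarith)
  have hkey : 2 * Real.sqrt (k+4) < k := by
    have h1 : (2 * Real.sqrt (k+4))^2 < k^2 := by
      nlinarith [Real.sq_sqrt (by norm_num : (5:ℝ) ≥ 0), Real.sqrt_nonneg 5]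
    exact lt_of_pow_lt_pow_left₀ 2 (by linarith) h1
  have heq : Real.sqrt ((k+4)/(k-4)) = Real.sqrt (k+4) / Real.sqrt (k-4) :=
    Real.sqrt_div (by linarith) _
  have hcos : Real.cos (2*π*θ) ≤ 1 := Real.cos_le_one _
  have hq0 : 0 ≤ Real.sqrt (k+4) / Real.sqrt (k-4) := by positivity
  unfold Bt
  rw [heq]
  calc Real.sqrt (k+4) / Real.sqrt (k-4) * (2 * Real.cos (2*π*θ))
        - k / Real.sqrt (k-4)
      = (Real.sqrt (k+4) * (2 * Real.cos (2*π*θ)) - k) / Real.sqrt (k-4) := by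
        field_simp
    _ ≤ (Real.sqrt (k+4) * 2 - k) / Real.sqrt (k-4) := by
        gcongr
        nlinarith
    _ < 0 := div_neg_of_neg_of_pos (by linarith) hc

lemma exp_add_inv (θ : ℝ) :
    Complex.exp (2*(π:ℂ)*Complex.I*(θ:ℝ)) + (Complex.exp (2*(π:ℂ)*Complex.I*(θ:ℝ)))⁻¹
      = ((2 * Real.cos (2*π*θ) : ℝ) : ℂ) := by
  rw [← Complex.exp_neg]
  have h1 : (2*(π:ℂ)*Complex.I*(θ:ℝ)) = ((2*π*θ:ℝ):ℂ) * Complex.I := by push_cast; ring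
  rw [h1, ← neg_mul, Complex.exp_mul_I, Complex.exp_mul_I, Complex.cos_neg, Complex.sin_neg,
    ← Complex.ofReal_cos]
  push_cast
  ring

/-- For every real `k > 2(1+√5)`, `m⁻(P̃_k) = 0` and consequently
`m⁺(P̃_k) − m⁻(P̃_k) = m(P̃_k)`. -/
theorem mMinus_eq_zero (k : ℝ) (hk : 2 * (1 + Real.sqrt 5) < k) :
    mMinus k = 0 ∧ mPlus k - mMinus k = mahlerPt k := by
  have hm0 : mMinus k = 0 := by
    unfold mMinus
    rw [intervalIntegral.integral_congr (g := fun _ : ℝ => (0:ℝ)) (fun θ _ => ?_)]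
    · simp
    · have hb := Bt_neg k hk θ
      have h := ym_lt (Bt k θ) hb
      have h2 : Real.log |yMinus k θ| ≤ 0 :=
        Real.log_nonpos (abs_nonneg _) (le_of_lt h)
      simpa using max_eq_left h2
  have hPlusEq : mPlus k = ∫ θ in (0:ℝ)..1, Real.log (yPlus k θ) := by
    unfold mPlus
    apply intervalIntegral.integral_congr
    intro θ _
    have h1 : 1 < yPlus k θ := yp_gt (Bt k θ) (Bt_neg k hk θ)
    show max 0 (Real.log |yPlus k θ|) = Real.log (yPlus k θ)
    rw [abs_of_pos (by linarith)]
    exact max_eq_right (Real.log_nonneg (by linarith))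
  have hMt : mahlerPt k = ∫ θ in (0:ℝ)..1, Real.log (yPlus k θ) := by
    unfold mahlerPt
    apply intervalIntegral.integral_congr
    intro θ _
    have hb := Bt_neg k hk θ
    have hE : ∀ φ : ℝ,
        ((Real.sqrt ((k + 4) / (k - 4)) : ℂ) *
          (Complex.exp (2 * Real.pi * Complex.I * θ) +
            (Complex.exp (2 * Real.pi * Complex.I * θ))⁻¹) +
         Complex.exp (2 * Real.pi * Complex.I * φ) -
          (Complex.exp (2 * Real.pi * Complex.I * φ))⁻¹ -
         ((k / Real.sqrt (k - 4) : ℝ) : ℂ))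
        = (Bt k θ : ℂ) + Complex.exp (2*(π:ℂ)*Complex.I*(φ:ℝ))
          - (Complex.exp (2*(π:ℂ)*Complex.I*(φ:ℝ)))⁻¹ := by
      intro φ
      rw [exp_add_inv θ]
      unfold Bt
      push_cast
      ring
    show (∫ φ in (0:ℝ)..1,
        Real.log (Norm.norm
          ((Real.sqrt ((k + 4) / (k - 4)) : ℂ) *
            (Complex.exp (2 * Real.pi * Complex.I * θ) +
              (Complex.exp (2 * Real.pi * Complex.I * θ))⁻¹) +
           Complex.exp (2 * Real.pi * Complex.I * φ) -
            (Complex.exp (2 * Real.pi * Complex.I * φ))⁻¹ -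
           ((k / Real.sqrt (k - 4) : ℝ) : ℂ)))) = Real.log (yPlus k θ)
    rw [intervalIntegral.integral_congr (g := fun φ : ℝ =>
        Real.log (‖(Bt k θ : ℂ) + Complex.exp (2*(π:ℂ)*Complex.I*(φ:ℝ))
          - (Complex.exp (2*(π:ℂ)*Complex.I*(φ:ℝ)))⁻¹‖))
        (fun φ _ => by rw [hE φ]),
      inner_int (Bt k θ) hb]
    rfl
  exact ⟨hm0, by rw [hm0, sub_zero, hPlusEq, hMt]⟩
end
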